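/- Let k be a field, S = k[t,u,v,x,y], r_0, r_1, r_2 ∈ k[t] with 2·deg r_1 > deg r_0 + deg r_2. For n ≥ 0 set I_n = (u^n, v^n, x^n, y^n, r_0 u^2 x^2 + r_1 u x v y + r_2 v^2 y^2) and let L_n be the least common multiple of P_1, …, P_{n−1} (where P_j is the recurrence sequence P_0 = 1, P_1 = r_1, P_{j+1} = r_1 P_j − r_0 r_2 P_{j−1}). Then for all nonnegative integers a, b, c, d with 2a + 2b + c + d = 2n, one has (r_0 r_2)^{a+b} L_n (u x)^a (v y)^b x^c y^d ∈ I_n. -/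

import Mathlib

open MvPolynomial

section Aux

variable {R : Type*} [CommRing R]

private lemma aux_mem_of_eq {I : Ideal R} {x y : R} (h : x = y) (hy : y ∈ I) : x ∈ I :=
  h ▸ hy

private lemma aux_neg_one_pow_mem {I : Ideal R} {m : ℕ} {z : R}
    (h : (-1) ^ m * z ∈ I) : z ∈ I := by
  have h2 := I.mul_mem_left ((-1) ^ m) h
  have h3 : ((-1 : R) ^ m) * ((-1) ^ m * z) = z := by
    rw [← mul_assoc, ← pow_add, Even.neg_one_pow ⟨m, rfl⟩, one_mul]
  rwa [h3] at h2

/-- B-raising identity: `ρ₂^{m+1} A^a B^{e+m+2} ≡ π_{m+1} A^{a+m+1} B^{e+1} - ρ₀ π_m A^{a+m+2} B^e`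
modulo `F = ρ₀A² + ρ₁AB + ρ₂B²`, where `π` is the sign-absorbed recurrence sequence. -/
private lemma auxL1 (ρ₀ ρ₁ ρ₂ : R) (π : ℕ → R) (A B : R)
    (hπ0 : π 0 = 1) (hπ1 : π 1 = -ρ₁)
    (hπr : ∀ j, π (j + 2) = -(ρ₁ * π (j + 1)) - ρ₀ * ρ₂ * π j) :
    ∀ m a e : ℕ, (ρ₀ * A ^ 2 + ρ₁ * A * B + ρ₂ * B ^ 2) ∣
      ρ₂ ^ (m + 1) * A ^ a * B ^ (e + m + 2)
        - π (m + 1) * A ^ (a + m + 1) * B ^ (e + 1)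
        + ρ₀ * π m * A ^ (a + m + 2) * B ^ e := by
  intro m
  induction m with
  | zero =>
    intro a e
    refine ⟨A ^ a * B ^ e, ?_⟩
    simp only [Nat.zero_add, Nat.add_zero]
    rw [hπ1, hπ0]
    ring
  | succ m ih =>
    intro a e
    obtain ⟨q1, h1⟩ := ih a (e + 1)
    refine ⟨ρ₂ * q1 + π (m + 1) * (A ^ (a + m + 1) * B ^ e), ?_⟩
    have hr : π (m + 1 + 1) = -(ρ₁ * π (m + 1)) - ρ₀ * ρ₂ * π m := hπr m
    rw [hr]
    linear_combination ρ₂ * h1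

private lemma auxK1 (ρ₀ ρ₁ ρ₂ : R) (π : ℕ → R) (A B : R)
    (hπ0 : π 0 = 1) (hπ1 : π 1 = -ρ₁)
    (hπr : ∀ j, π (j + 2) = -(ρ₁ * π (j + 1)) - ρ₀ * ρ₂ * π j) :
    ∀ a' : ℕ, (ρ₀ * A ^ 2 + ρ₁ * A * B + ρ₂ * B ^ 2) ∣
      π (a' + 1) * A ^ (a' + 1) * B - ρ₀ * π a' * A ^ (a' + 2) - ρ₂ ^ (a' + 1) * B ^ (a' + 2) := by
  intro a'
  induction a' with
  | zero =>
    refine ⟨-1, ?_⟩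
    simp only [Nat.zero_add]
    rw [hπ1, hπ0]
    ring
  | succ a ih =>
    obtain ⟨q, hq⟩ := ih
    refine ⟨ρ₂ * B * q - π (a + 1) * A ^ (a + 1), ?_⟩
    have hr : π (a + 1 + 1) = -(ρ₁ * π (a + 1)) - ρ₀ * ρ₂ * π a := hπr a
    rw [hr]
    linear_combination ρ₂ * B * hq

/-- Catalan-type identity for the sign-absorbed sequence. -/
private lemma auxC (ρ₀ ρ₁ ρ₂ : R) (π : ℕ → R)
    (hπ0 : π 0 = 1) (hπ1 : π 1 = -ρ₁)
    (hπr : ∀ j, π (j + 2) = -(ρ₁ * π (j + 1)) - ρ₀ * ρ₂ * π j) :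
    ∀ i e : ℕ, π (i + 1) * π (i + e + 1) - π i * π (i + e + 2) = (ρ₀ * ρ₂) ^ (i + 1) * π e := by
  intro i
  induction i with
  | zero =>
    intro e
    simp only [Nat.zero_add]
    rw [hπr e, hπ1, hπ0]
    ring
  | succ i ih =>
    intro e
    have e1 : π (i + 1 + 1) = -(ρ₁ * π (i + 1)) - ρ₀ * ρ₂ * π i := hπr i
    have e2 : π (i + 1 + e + 2) = -(ρ₁ * π (i + e + 2)) - ρ₀ * ρ₂ * π (i + e + 1) := by
      rw [show i + 1 + e + 2 = i + e + 1 + 2 by omega]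
      exact hπr (i + e + 1)
    have e3 : π (i + 1 + e + 1) = π (i + e + 2) := by rw [show i + 1 + e + 1 = i + e + 2 by omega]
    rw [e1, e2, e3]
    linear_combination (ρ₀ * ρ₂) * ih e

/-- KEY identity: `π_{a'+b'+1} ρ₂^{b'} A^{a'+1} B^{b'+1} ≡ ρ₀^{b'+1} ρ₂^{b'} π_{a'} A^{s} +
ρ₂^{s-1} π_{b'} B^{s}` mod F, where `s = a'+b'+2`. -/
private lemma auxKEY (ρ₀ ρ₁ ρ₂ : R) (π : ℕ → R) (A B : R)
    (hπ0 : π 0 = 1) (hπ1 : π 1 = -ρ₁)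
    (hπr : ∀ j, π (j + 2) = -(ρ₁ * π (j + 1)) - ρ₀ * ρ₂ * π j) :
    ∀ a' b' : ℕ, (ρ₀ * A ^ 2 + ρ₁ * A * B + ρ₂ * B ^ 2) ∣
      π (a' + b' + 1) * ρ₂ ^ b' * A ^ (a' + 1) * B ^ (b' + 1)
        - ρ₀ ^ (b' + 1) * ρ₂ ^ b' * π a' * A ^ (a' + b' + 2)
        - ρ₂ ^ (a' + b' + 1) * π b' * B ^ (a' + b' + 2) := by
  intro a' b'
  rcases eq_or_ne b' 0 with rfl | hb
  · obtain ⟨q, hq⟩ := auxK1 ρ₀ ρ₁ ρ₂ π A B hπ0 hπ1 hπr a'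
    refine ⟨q, ?_⟩
    simp only [Nat.add_zero, Nat.zero_add, pow_zero, pow_one]
    rw [hπ0]
    linear_combination hq
  · obtain ⟨b'', rfl⟩ : ∃ b'', b' = b'' + 1 := ⟨b' - 1, by omega⟩
    obtain ⟨q1, h1⟩ := auxL1 ρ₀ ρ₁ ρ₂ π A B hπ0 hπ1 hπr b'' (a' + 1) 0
    obtain ⟨q2, h2⟩ := auxK1 ρ₀ ρ₁ ρ₂ π A B hπ0 hπ1 hπr (a' + b'' + 1)
    have hC := auxC ρ₀ ρ₁ ρ₂ π hπ0 hπ1 hπr b'' a'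
    refine ⟨π (a' + b'' + 2) * q1 + π (b'' + 1) * q2, ?_⟩
    have g1 : π (a' + (b'' + 1) + 1) = π (a' + b'' + 2) := by
      rw [show a' + (b'' + 1) + 1 = a' + b'' + 2 by omega]
    have g3 : π (a' + b'' + 1 + 1) = π (a' + b'' + 2) := by
      rw [show a' + b'' + 1 + 1 = a' + b'' + 2 by omega]
    have g4 : π (b'' + a' + 1) = π (a' + b'' + 1) := by
      rw [show b'' + a' + 1 = a' + b'' + 1 by omega]
    have g5 : π (b'' + a' + 2) = π (a' + b'' + 2) := by
      rw [show b'' + a' + 2 = a' + b'' + 2 by omega]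
    rw [g1]
    rw [g3] at h2
    rw [g4, g5] at hC
    linear_combination π (a' + b'' + 2) * h1 + π (b'' + 1) * h2 + (ρ₀ * A ^ (a' + b'' + 3)) * hC

end Aux

set_option maxHeartbeats 2000000

/-- In `S = k[t,u,v,x,y]` (with `t = X 0`, `u = X 1`, `v = X 2`, `x = X 3`,
`y = X 4`), assuming `2 deg r₁ > deg r₀ + deg r₂`, with `P` the recurrence sequence and
`L` a least common multiple of `P_1, …, P_{n-1}`, for all `a b c d ≥ 0` with
`2a + 2b + c + d = 2n` one has `(r₀ r₂)^{a+b} L (u x)^a (v y)^b x^c y^d ∈ I_n`, where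
`I_n = (u^n, v^n, x^n, y^n, r₀ u²x² + r₁ u x v y + r₂ v²y²)`. -/
theorem stmt10 {k : Type*} [Field k] (r₀ r₁ r₂ : Polynomial k)
    (hdeg : r₀.degree + r₂.degree < r₁.degree + r₁.degree)
    (P : ℕ → Polynomial k) (hP0 : P 0 = 1) (hP1 : P 1 = r₁)
    (hPrec : ∀ j : ℕ, 1 ≤ j → P (j + 1) = r₁ * P j - r₀ * r₂ * P (j - 1))
    (n : ℕ) (L : Polynomial k)
    (hLdvd : ∀ j ∈ Finset.Icc 1 (n - 1), P j ∣ L)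
    (hLmin : ∀ M : Polynomial k, (∀ j ∈ Finset.Icc 1 (n - 1), P j ∣ M) → L ∣ M) :
    ∀ a b c d : ℕ, 2 * a + 2 * b + c + d = 2 * n →
      Polynomial.aeval (X 0 : MvPolynomial (Fin 5) k) ((r₀ * r₂) ^ (a + b) * L) *
          ((X 1) * (X 3)) ^ a * ((X 2) * (X 4)) ^ b * (X 3) ^ c * (X 4) ^ d ∈
        Ideal.span {(X 1 : MvPolynomial (Fin 5) k) ^ n, (X 2) ^ n, (X 3) ^ n, (X 4) ^ n,
          Polynomial.aeval (X 0 : MvPolynomial (Fin 5) k) r₀ * (X 1) ^ 2 * (X 3) ^ 2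
            + Polynomial.aeval (X 0 : MvPolynomial (Fin 5) k) r₁ * (X 1) * (X 3) * (X 2) * (X 4)
            + Polynomial.aeval (X 0 : MvPolynomial (Fin 5) k) r₂ * (X 2) ^ 2 * (X 4) ^ 2} := by
  intro a b c d hsum
  have hQ0 : (-1 : MvPolynomial (Fin 5) k) ^ (0 : ℕ) * Polynomial.aeval (X 0 : MvPolynomial (Fin 5) k) (P 0) = 1 := by
    simp [hP0]
  have hQ1 : (-1 : MvPolynomial (Fin 5) k) ^ (1 : ℕ) * Polynomial.aeval (X 0 : MvPolynomial (Fin 5) k) (P 1) = -(Polynomial.aeval (X 0 : MvPolynomial (Fin 5) k) r₁) := by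
    simp [hP1]
  have hQr : ∀ j : ℕ, (-1 : MvPolynomial (Fin 5) k) ^ (j + 2) * Polynomial.aeval (X 0 : MvPolynomial (Fin 5) k) (P (j + 2)) =
      -((Polynomial.aeval (X 0 : MvPolynomial (Fin 5) k) r₁) * ((-1) ^ (j + 1) * Polynomial.aeval (X 0 : MvPolynomial (Fin 5) k) (P (j + 1))))
        - (Polynomial.aeval (X 0 : MvPolynomial (Fin 5) k) r₀) * (Polynomial.aeval (X 0 : MvPolynomial (Fin 5) k) r₂) * ((-1) ^ j * Polynomial.aeval (X 0 : MvPolynomial (Fin 5) k) (P j)) := by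
    intro j
    have h0 : P (j + 1 + 1) = r₁ * P (j + 1) - r₀ * r₂ * P (j + 1 - 1) := hPrec (j + 1) (by omega)
    have h2 : P (j + 2) = r₁ * P (j + 1) - r₀ * r₂ * P j := by simpa using h0
    rw [h2]
    simp only [map_sub, map_mul]
    ring
  have hQr' : ∀ j : ℕ, (-1 : MvPolynomial (Fin 5) k) ^ (j + 2) * Polynomial.aeval (X 0 : MvPolynomial (Fin 5) k) (P (j + 2)) =
      -((Polynomial.aeval (X 0 : MvPolynomial (Fin 5) k) r₁) * ((-1) ^ (j + 1) * Polynomial.aeval (X 0 : MvPolynomial (Fin 5) k) (P (j + 1))))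
        - (Polynomial.aeval (X 0 : MvPolynomial (Fin 5) k) r₂) * (Polynomial.aeval (X 0 : MvPolynomial (Fin 5) k) r₀) * ((-1) ^ j * Polynomial.aeval (X 0 : MvPolynomial (Fin 5) k) (P j)) := by
    intro j
    rw [hQr j]
    ring
  have hX3 : (X 3 : MvPolynomial (Fin 5) k) ^ n ∈ Ideal.span {(X 1 : MvPolynomial (Fin 5) k) ^ n, (X 2) ^ n, (X 3) ^ n, (X 4) ^ n, Polynomial.aeval (X 0 : MvPolynomial (Fin 5) k) r₀ * (X 1) ^ 2 * (X 3) ^ 2 + Polynomial.aeval (X 0 : MvPolynomial (Fin 5) k) r₁ * (X 1) * (X 3) * (X 2) * (X 4) + Polynomial.aeval (X 0 : MvPolynomial (Fin 5) k) r₂ * (X 2) ^ 2 * (X 4) ^ 2} :=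
    Ideal.subset_span (by simp)
  have hX4 : (X 4 : MvPolynomial (Fin 5) k) ^ n ∈ Ideal.span {(X 1 : MvPolynomial (Fin 5) k) ^ n, (X 2) ^ n, (X 3) ^ n, (X 4) ^ n, Polynomial.aeval (X 0 : MvPolynomial (Fin 5) k) r₀ * (X 1) ^ 2 * (X 3) ^ 2 + Polynomial.aeval (X 0 : MvPolynomial (Fin 5) k) r₁ * (X 1) * (X 3) * (X 2) * (X 4) + Polynomial.aeval (X 0 : MvPolynomial (Fin 5) k) r₂ * (X 2) ^ 2 * (X 4) ^ 2} :=
    Ideal.subset_span (by simp)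
  have hFm : (Polynomial.aeval (X 0 : MvPolynomial (Fin 5) k) r₀ * (X 1) ^ 2 * (X 3) ^ 2 + Polynomial.aeval (X 0 : MvPolynomial (Fin 5) k) r₁ * (X 1) * (X 3) * (X 2) * (X 4) + Polynomial.aeval (X 0 : MvPolynomial (Fin 5) k) r₂ * (X 2) ^ 2 * (X 4) ^ 2) ∈ Ideal.span {(X 1 : MvPolynomial (Fin 5) k) ^ n, (X 2) ^ n, (X 3) ^ n, (X 4) ^ n, Polynomial.aeval (X 0 : MvPolynomial (Fin 5) k) r₀ * (X 1) ^ 2 * (X 3) ^ 2 + Polynomial.aeval (X 0 : MvPolynomial (Fin 5) k) r₁ * (X 1) * (X 3) * (X 2) * (X 4) + Polynomial.aeval (X 0 : MvPolynomial (Fin 5) k) r₂ * (X 2) ^ 2 * (X 4) ^ 2} :=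
    Ideal.subset_span (by simp)
  by_cases h1 : n ≤ a + c
  · -- x-power already ≥ n
    obtain ⟨e, he⟩ : ∃ e, a + c = n + e := ⟨a + c - n, by omega⟩
    have hsplit : (X 3 : MvPolynomial (Fin 5) k) ^ a * X 3 ^ c = X 3 ^ n * X 3 ^ e := by
      rw [← pow_add, he, pow_add]
    refine aux_mem_of_eq ?_ (Ideal.mul_mem_left _
      (Polynomial.aeval (X 0 : MvPolynomial (Fin 5) k) ((r₀ * r₂) ^ (a + b) * L) * X 1 ^ a * (X 2 * X 4) ^ b * X 4 ^ d * X 3 ^ e) hX3)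
    linear_combination (Polynomial.aeval (X 0 : MvPolynomial (Fin 5) k) ((r₀ * r₂) ^ (a + b) * L) * X 1 ^ a * (X 2 * X 4) ^ b * X 4 ^ d) * hsplit
  by_cases h2 : n ≤ b + d
  · -- y-power already ≥ n
    obtain ⟨e, he⟩ : ∃ e, b + d = n + e := ⟨b + d - n, by omega⟩
    have hsplit : (X 4 : MvPolynomial (Fin 5) k) ^ b * X 4 ^ d = X 4 ^ n * X 4 ^ e := by
      rw [← pow_add, he, pow_add]
    refine aux_mem_of_eq ?_ (Ideal.mul_mem_left _
      (Polynomial.aeval (X 0 : MvPolynomial (Fin 5) k) ((r₀ * r₂) ^ (a + b) * L) * (X 1 * X 3) ^ a * X 2 ^ b * X 3 ^ c * X 4 ^ e) hX4)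
    linear_combination (Polynomial.aeval (X 0 : MvPolynomial (Fin 5) k) ((r₀ * r₂) ^ (a + b) * L) * (X 1 * X 3) ^ a * X 2 ^ b * X 3 ^ c) * hsplit
  rcases lt_trichotomy (a + b + c) n with h3 | h3 | h3
  · -- case a+b+c < n, hence a+b+d > n : reduce towards y-powers
    obtain ⟨w, e0, rfl, rfl, rfl⟩ :
        ∃ w e0, d = c + 2 * e0 + 2 ∧ a = w + e0 + 2 ∧ n = b + c + 2 * e0 + 3 + w := by
      refine ⟨n - b - d - 1, a + b + d - n - 1, ?_, ?_, ?_⟩ <;> omega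
    obtain ⟨q, hq⟩ := auxL1 (Polynomial.aeval (X 0 : MvPolynomial (Fin 5) k) r₂) (Polynomial.aeval (X 0 : MvPolynomial (Fin 5) k) r₁) (Polynomial.aeval (X 0 : MvPolynomial (Fin 5) k) r₀) (fun j => (-1 : MvPolynomial (Fin 5) k) ^ j * Polynomial.aeval (X 0 : MvPolynomial (Fin 5) k) (P j))
      (X 2 * X 4) (X 1 * X 3) hQ0 hQ1 hQr' w b e0
    beta_reduce at hq
    refine aux_mem_of_eq ?_ (add_mem (Ideal.mul_mem_left _
        ((Polynomial.aeval (X 0 : MvPolynomial (Fin 5) k) r₀) ^ (b + e0 + 1) * (Polynomial.aeval (X 0 : MvPolynomial (Fin 5) k) r₂) ^ (b + w + e0 + 2) * (Polynomial.aeval (X 0 : MvPolynomial (Fin 5) k) L) * X 3 ^ c * X 4 ^ (c + 2 * e0 + 2) * q) hFm)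
      (Ideal.mul_mem_left _
        ((Polynomial.aeval (X 0 : MvPolynomial (Fin 5) k) r₀) ^ (b + e0 + 1) * (Polynomial.aeval (X 0 : MvPolynomial (Fin 5) k) r₂) ^ (b + w + e0 + 2) * (Polynomial.aeval (X 0 : MvPolynomial (Fin 5) k) L) * ((-1) ^ (w + 1) * Polynomial.aeval (X 0 : MvPolynomial (Fin 5) k) (P (w + 1))) * X 2 ^ (b + w + 1) * X 1 ^ (e0 + 1) * X 3 ^ (e0 + 1 + c)
          - (Polynomial.aeval (X 0 : MvPolynomial (Fin 5) k) r₀) ^ (b + e0 + 1) * (Polynomial.aeval (X 0 : MvPolynomial (Fin 5) k) r₂) ^ (b + w + e0 + 3) * (Polynomial.aeval (X 0 : MvPolynomial (Fin 5) k) L) * ((-1) ^ w * Polynomial.aeval (X 0 : MvPolynomial (Fin 5) k) (P w)) * X 2 ^ (b + w + 2) * X 1 ^ e0 * X 3 ^ (e0 + c) * X 4) hX4))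
    simp only [map_mul, map_pow]
    linear_combination ((Polynomial.aeval (X 0 : MvPolynomial (Fin 5) k) r₀) ^ (b + e0 + 1) * (Polynomial.aeval (X 0 : MvPolynomial (Fin 5) k) r₂) ^ (b + w + e0 + 2) * (Polynomial.aeval (X 0 : MvPolynomial (Fin 5) k) L) * X 3 ^ c * X 4 ^ (c + 2 * e0 + 2)) * hq
  · -- case a+b+c = n = a+b+d : use the key identity and L's divisibility
    obtain ⟨a', b', rfl, rfl, rfl, rfl⟩ :
        ∃ a' b', c = d ∧ a = a' + 1 ∧ b = b' + 1 ∧ n = a' + b' + 2 + c := by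
      refine ⟨a - 1, b - 1, ?_, ?_, ?_, ?_⟩ <;> omega
    obtain ⟨Lq, hLq⟩ := hLdvd (a' + b' + 1) (Finset.mem_Icc.mpr ⟨by omega, by omega⟩)
    obtain ⟨q, hq⟩ := auxKEY (Polynomial.aeval (X 0 : MvPolynomial (Fin 5) k) r₀) (Polynomial.aeval (X 0 : MvPolynomial (Fin 5) k) r₁) (Polynomial.aeval (X 0 : MvPolynomial (Fin 5) k) r₂) (fun j => (-1 : MvPolynomial (Fin 5) k) ^ j * Polynomial.aeval (X 0 : MvPolynomial (Fin 5) k) (P j))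
      (X 1 * X 3) (X 2 * X 4) hQ0 hQ1 hQr a' b'
    beta_reduce at hq
    refine aux_neg_one_pow_mem (m := a' + b' + 1) ?_
    refine aux_mem_of_eq ?_ (add_mem (add_mem (Ideal.mul_mem_left _
        ((Polynomial.aeval (X 0 : MvPolynomial (Fin 5) k) r₀) ^ (a' + b' + 2) * (Polynomial.aeval (X 0 : MvPolynomial (Fin 5) k) r₂) ^ (a' + 2) * Polynomial.aeval (X 0 : MvPolynomial (Fin 5) k) Lq * X 3 ^ c * X 4 ^ c * q) hFm)
      (Ideal.mul_mem_left _
        ((Polynomial.aeval (X 0 : MvPolynomial (Fin 5) k) r₀) ^ (a' + 2 * b' + 3) * (Polynomial.aeval (X 0 : MvPolynomial (Fin 5) k) r₂) ^ (a' + b' + 2) * Polynomial.aeval (X 0 : MvPolynomial (Fin 5) k) Lq * ((-1) ^ a' * Polynomial.aeval (X 0 : MvPolynomial (Fin 5) k) (P a')) * X 1 ^ (a' + b' + 2) * X 4 ^ c) hX3))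
      (Ideal.mul_mem_left _
        ((Polynomial.aeval (X 0 : MvPolynomial (Fin 5) k) r₀) ^ (a' + b' + 2) * (Polynomial.aeval (X 0 : MvPolynomial (Fin 5) k) r₂) ^ (2 * a' + b' + 3) * Polynomial.aeval (X 0 : MvPolynomial (Fin 5) k) Lq * ((-1) ^ b' * Polynomial.aeval (X 0 : MvPolynomial (Fin 5) k) (P b')) * X 2 ^ (a' + b' + 2) * X 3 ^ c) hX4))
    rw [hLq]
    simp only [map_mul, map_pow]
    linear_combination ((Polynomial.aeval (X 0 : MvPolynomial (Fin 5) k) r₀) ^ (a' + b' + 2) * (Polynomial.aeval (X 0 : MvPolynomial (Fin 5) k) r₂) ^ (a' + 2) * Polynomial.aeval (X 0 : MvPolynomial (Fin 5) k) Lq * X 3 ^ c * X 4 ^ c) * hq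
  · -- case a+b+c > n : reduce towards x-powers
    obtain ⟨w, e0, rfl, rfl, rfl⟩ :
        ∃ w e0, c = d + 2 * e0 + 2 ∧ b = w + e0 + 2 ∧ n = a + d + 2 * e0 + 3 + w := by
      refine ⟨n - a - c - 1, a + b + c - n - 1, ?_, ?_, ?_⟩ <;> omega
    obtain ⟨q, hq⟩ := auxL1 (Polynomial.aeval (X 0 : MvPolynomial (Fin 5) k) r₀) (Polynomial.aeval (X 0 : MvPolynomial (Fin 5) k) r₁) (Polynomial.aeval (X 0 : MvPolynomial (Fin 5) k) r₂) (fun j => (-1 : MvPolynomial (Fin 5) k) ^ j * Polynomial.aeval (X 0 : MvPolynomial (Fin 5) k) (P j))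
      (X 1 * X 3) (X 2 * X 4) hQ0 hQ1 hQr w a e0
    beta_reduce at hq
    refine aux_mem_of_eq ?_ (add_mem (Ideal.mul_mem_left _
        ((Polynomial.aeval (X 0 : MvPolynomial (Fin 5) k) r₀) ^ (a + w + e0 + 2) * (Polynomial.aeval (X 0 : MvPolynomial (Fin 5) k) r₂) ^ (a + e0 + 1) * (Polynomial.aeval (X 0 : MvPolynomial (Fin 5) k) L) * X 3 ^ (d + 2 * e0 + 2) * X 4 ^ d * q) hFm)
      (Ideal.mul_mem_left _
        ((Polynomial.aeval (X 0 : MvPolynomial (Fin 5) k) r₀) ^ (a + w + e0 + 2) * (Polynomial.aeval (X 0 : MvPolynomial (Fin 5) k) r₂) ^ (a + e0 + 1) * (Polynomial.aeval (X 0 : MvPolynomial (Fin 5) k) L) * ((-1) ^ (w + 1) * Polynomial.aeval (X 0 : MvPolynomial (Fin 5) k) (P (w + 1))) * X 1 ^ (a + w + 1) * X 2 ^ (e0 + 1) * X 4 ^ (e0 + 1 + d)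
          - (Polynomial.aeval (X 0 : MvPolynomial (Fin 5) k) r₀) ^ (a + w + e0 + 3) * (Polynomial.aeval (X 0 : MvPolynomial (Fin 5) k) r₂) ^ (a + e0 + 1) * (Polynomial.aeval (X 0 : MvPolynomial (Fin 5) k) L) * ((-1) ^ w * Polynomial.aeval (X 0 : MvPolynomial (Fin 5) k) (P w)) * X 1 ^ (a + w + 2) * X 2 ^ e0 * X 4 ^ (e0 + d) * X 3) hX3))
    simp only [map_mul, map_pow]
    linear_combination ((Polynomial.aeval (X 0 : MvPolynomial (Fin 5) k) r₀) ^ (a + w + e0 + 2) * (Polynomial.aeval (X 0 : MvPolynomial (Fin 5) k) r₂) ^ (a + e0 + 1) * (Polynomial.aeval (X 0 : MvPolynomial (Fin 5) k) L) * X 3 ^ (d + 2 * e0 + 2) * X 4 ^ d) * hq
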